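/- Let R be an integral domain and let f, g ∈ R[X] be polynomials of degree n and m respectively which split completely: f = a_n·∏_{i=1}^{n} (X − α_i) and g = b_m·∏_{j=1}^{m} (X − β_j), where a_n and b_m are the (nonzero) leading coefficients. Then Res(f, g) = (−1)^(n·m) · a_n^m · b_m^n · ∏_{i=1}^{n} ∏_{j=1}^{m} (α_i − β_j). -/

import Mathlib

open Polynomial

variable {R : Type*} [CommRing R]

/-- The Sylvester matrix of `f` and `g`: a square matrix of size
`deg f + deg g`, whose first `deg f` rows contain the (shifted) coefficients of `g`
and whose remaining `deg g` rows contain the (shifted) coefficients of `f`. -/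
def sylvester (f g : Polynomial R) :
    Matrix (Fin (f.natDegree + g.natDegree)) (Fin (f.natDegree + g.natDegree)) R :=
  Matrix.of fun i j =>
    if (i : ℕ) < f.natDegree then
      if (i : ℕ) ≤ (j : ℕ) ∧ (j : ℕ) ≤ (i : ℕ) + g.natDegree then
        g.coeff ((i : ℕ) + g.natDegree - (j : ℕ))
      else 0
    else
      if ((i : ℕ) - f.natDegree) ≤ (j : ℕ) ∧
          (j : ℕ) ≤ ((i : ℕ) - f.natDegree) + f.natDegree then
        f.coeff (((i : ℕ) - f.natDegree) + f.natDegree - (j : ℕ))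
      else 0

/-- The resultant of two polynomials: the determinant of their Sylvester matrix. -/
def resultant (f g : Polynomial R) : R := (_root_.sylvester f g).det

section ResultantAux

open Matrix Finset Equiv


def sylAux (n m : ℕ) (F G : ℕ → R) :
    Matrix (Fin (n + m)) (Fin (n + m)) R :=
  Matrix.of fun i j =>
    if (i : ℕ) < n then
      if (i : ℕ) ≤ (j : ℕ) ∧ (j : ℕ) ≤ (i : ℕ) + m then
        G ((i : ℕ) + m - (j : ℕ))
      else 0
    else
      if ((i : ℕ) - n) ≤ (j : ℕ) ∧ (j : ℕ) ≤ ((i : ℕ) - n) + n then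
        F (((i : ℕ) - n) + n - (j : ℕ))
      else 0

def vmono (N : ℕ) (v : Fin N → R) : Matrix (Fin N) (Fin N) R :=
  Matrix.of fun i k => v k ^ (N - 1 - (i : ℕ))


lemma revPerm_decompose (N : ℕ) :
    (Fin.revPerm : Equiv.Perm (Fin (N+1))) =
      Equiv.Perm.decomposeFin.symm (Fin.last N, Fin.revPerm * finRotate N) := by
  ext i
  refine Fin.cases ?_ (fun x => ?_) i
  · simp
  · rw [Equiv.Perm.decomposeFin_symm_apply_succ]
    have hN : 0 < N := x.pos
    rcases Nat.exists_eq_succ_of_ne_zero hN.ne' with ⟨K, rfl⟩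
    set σ : Equiv.Perm (Fin (K+1)) := Fin.revPerm * finRotate (K+1) with hσ
    by_cases h : x = Fin.last K
    · subst h
      have h1 : σ (Fin.last K) = Fin.last K := by
        apply Fin.ext
        simp [hσ, Fin.val_rev, finRotate_last]
      rw [h1]
      have h2 : (Fin.last K).succ = Fin.last (K+1) := by apply Fin.ext; simp
      rw [h2, Equiv.swap_apply_right]
      simp [Fin.val_rev]
    · have hx : (x : ℕ) < K := Fin.val_lt_last h
      have h1 : σ x = ⟨K - 1 - (x:ℕ), by omega⟩ := by
        apply Fin.ext
        have hr : ((finRotate (K+1)) x : ℕ) = (x:ℕ) + 1 := by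
          rw [finRotate_succ_apply, Fin.val_add_one, if_neg h]
        simp only [hσ, Equiv.Perm.mul_apply, Fin.revPerm_apply, Fin.val_rev, hr]
        omega
      rw [h1]
      rw [Equiv.swap_apply_of_ne_of_ne]
      · simp [Fin.val_rev, Fin.val_succ]; omega
      · simp [Fin.ext_iff]
      · simp [Fin.ext_iff]; omega

lemma sign_revPerm (N : ℕ) :
    Equiv.Perm.sign (Fin.revPerm : Equiv.Perm (Fin N)) = (-1) ^ (∑ i ∈ range N, i) := by
  induction N with
  | zero => simp [Subsingleton.elim (Fin.revPerm : Equiv.Perm (Fin 0)) 1]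
  | succ K ih =>
    rw [revPerm_decompose, Equiv.Perm.decomposeFin.symm_sign, _root_.map_mul, ih]
    rcases Nat.eq_zero_or_pos K with rfl | hK
    · simp [Subsingleton.elim (finRotate 0) 1]
    · rcases Nat.exists_eq_succ_of_ne_zero hK.ne' with ⟨J, rfl⟩
      rw [sign_finRotate]
      have h0 : (Fin.last (J+1) : Fin (J+2)) ≠ 0 := by simp [Fin.ext_iff]
      rw [if_neg h0]
      have h1 : ∑ i ∈ range (J+1+1), i = (∑ i ∈ range (J+1), i) + (J+1) := Finset.sum_range_succ _ _
      rw [h1, pow_add]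
      simp [pow_succ, mul_comm, mul_left_comm]


lemma det_vmono (N : ℕ) (v : Fin N → R)
    (hs : Equiv.Perm.sign (Fin.revPerm : Equiv.Perm (Fin N)) = (-1) ^ (∑ i ∈ range N, i)) :
    (vmono N v).det =
      (-1 : R) ^ (∑ i ∈ range N, i) * ∏ i : Fin N, ∏ j ∈ Ioi i, (v j - v i) := by
  have h : vmono N v = ((Matrix.vandermonde v)ᵀ).submatrix Fin.revPerm id := by
    ext i k
    simp [vmono, Matrix.vandermonde, Fin.val_rev]
    congr 1
    omega
  rw [h, Matrix.det_permute, Matrix.det_transpose, Matrix.det_vandermonde, hs]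
  push_cast
  norm_num

lemma sylAux_mul_vmono (n m : ℕ) (f g : Polynomial R)
    (hf : f.natDegree ≤ n) (hg : g.natDegree ≤ m) (w : Fin (n + m) → R) :
    sylAux n m f.coeff g.coeff * vmono (n + m) w =
      Matrix.of (fun (i k : Fin (n + m)) =>
        if (i : ℕ) < n then
          g.eval (w k) * w k ^ (n - 1 - (i : ℕ))
        else
          f.eval (w k) * w k ^ (m - 1 - ((i : ℕ) - n))) := by
  ext i k
  rw [Matrix.mul_apply]
  set γ := w k with hγ
  by_cases hi : (i : ℕ) < n
  · simp only [sylAux, vmono, Matrix.of_apply, if_pos hi]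
    have he : g.eval γ = ∑ t ∈ range (m + 1), g.coeff t * γ ^ t :=
      eval_eq_sum_range' (Nat.lt_succ_of_le hg) γ
    rw [he, Finset.sum_mul]
    have h1 : ∀ j : Fin (n + m),
        (if (i : ℕ) ≤ (j : ℕ) ∧ (j : ℕ) ≤ (i : ℕ) + m then g.coeff ((i : ℕ) + m - (j : ℕ)) else 0)
            * γ ^ (n + m - 1 - (j : ℕ)) =
          (if (i : ℕ) ≤ (j : ℕ) ∧ (j : ℕ) ≤ (i : ℕ) + m then
            g.coeff ((i : ℕ) + m - (j : ℕ)) * γ ^ (n + m - 1 - (j : ℕ)) else 0) := by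
      intro j; split <;> simp
    rw [Finset.sum_congr rfl (fun j _ => h1 j)]
    rw [Fin.sum_univ_eq_sum_range
      (fun j => if (i : ℕ) ≤ j ∧ j ≤ (i : ℕ) + m then
        g.coeff ((i : ℕ) + m - j) * γ ^ (n + m - 1 - j) else 0)]
    rw [← Finset.sum_filter]
    have h2 : (range (n + m)).filter (fun j => (i : ℕ) ≤ j ∧ j ≤ (i : ℕ) + m)
        = Finset.Icc (i : ℕ) ((i : ℕ) + m) := by
      ext j; simp only [mem_filter, mem_range, mem_Icc]; omega
    rw [h2]
    refine Finset.sum_nbij' (i := fun j => (i : ℕ) + m - j) (j := fun t => (i : ℕ) + m - t)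
      ?_ ?_ ?_ ?_ ?_
    · intro a ha; simp only [mem_Icc] at ha; simp only [mem_range]; omega
    · intro a ha; simp only [mem_range] at ha; simp only [mem_Icc]; omega
    · intro a ha; simp only [mem_Icc] at ha; omega
    · intro a ha; simp only [mem_range] at ha; omega
    · intro a ha; simp only [mem_Icc] at ha
      rw [mul_assoc, ← pow_add]
      congr 2
      omega
  · simp only [sylAux, vmono, Matrix.of_apply, if_neg hi]
    have he : f.eval γ = ∑ t ∈ range (n + 1), f.coeff t * γ ^ t :=
      eval_eq_sum_range' (Nat.lt_succ_of_le hf) γ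
    rw [he, Finset.sum_mul]
    have h1 : ∀ j : Fin (n + m),
        (if (i : ℕ) - n ≤ (j : ℕ) ∧ (j : ℕ) ≤ ((i : ℕ) - n) + n then
            f.coeff (((i : ℕ) - n) + n - (j : ℕ)) else 0)
            * γ ^ (n + m - 1 - (j : ℕ)) =
          (if (i : ℕ) - n ≤ (j : ℕ) ∧ (j : ℕ) ≤ ((i : ℕ) - n) + n then
            f.coeff (((i : ℕ) - n) + n - (j : ℕ)) * γ ^ (n + m - 1 - (j : ℕ)) else 0) := by
      intro j; split <;> simp
    rw [Finset.sum_congr rfl (fun j _ => h1 j)]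
    rw [Fin.sum_univ_eq_sum_range
      (fun j => if (i : ℕ) - n ≤ j ∧ j ≤ ((i : ℕ) - n) + n then
        f.coeff (((i : ℕ) - n) + n - j) * γ ^ (n + m - 1 - j) else 0)]
    rw [← Finset.sum_filter]
    have hilt : (i : ℕ) < n + m := i.isLt
    have h2 : (range (n + m)).filter (fun j => (i : ℕ) - n ≤ j ∧ j ≤ ((i : ℕ) - n) + n)
        = Finset.Icc ((i : ℕ) - n) (((i : ℕ) - n) + n) := by
      ext j; simp only [mem_filter, mem_range, mem_Icc]; omega
    rw [h2]
    refine Finset.sum_nbij' (i := fun j => ((i : ℕ) - n) + n - j)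
      (j := fun t => ((i : ℕ) - n) + n - t) ?_ ?_ ?_ ?_ ?_
    · intro a ha; simp only [mem_Icc] at ha; simp only [mem_range]; omega
    · intro a ha; simp only [mem_range] at ha; simp only [mem_Icc]; omega
    · intro a ha; simp only [mem_Icc] at ha; omega
    · intro a ha; simp only [mem_range] at ha; omega
    · intro a ha; simp only [mem_Icc] at ha
      rw [mul_assoc, ← pow_add]
      congr 2
      omega

lemma det_W (n m : ℕ) (f g : Polynomial R) (α : Fin n → R) (β : Fin m → R)
    (hfα : ∀ i, f.eval (α i) = 0) (hgβ : ∀ j, g.eval (β j) = 0) :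
    (Matrix.of (fun (i k : Fin (n + m)) =>
        if (i : ℕ) < n then
          g.eval (Fin.append α β k) * Fin.append α β k ^ (n - 1 - (i : ℕ))
        else
          f.eval (Fin.append α β k) * Fin.append α β k ^ (m - 1 - ((i : ℕ) - n)))).det
    = ((∏ k, g.eval (α k)) * (vmono n α).det) *
        ((∏ k, f.eval (β k)) * (vmono m β).det) := by
  rw [← Matrix.det_submatrix_equiv_self finSumFinEquiv]
  have hW : (Matrix.of (fun (i k : Fin (n + m)) =>
        if (i : ℕ) < n then
          g.eval (Fin.append α β k) * Fin.append α β k ^ (n - 1 - (i : ℕ))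
        else
          f.eval (Fin.append α β k) * Fin.append α β k ^ (m - 1 - ((i : ℕ) - n)))).submatrix
          finSumFinEquiv finSumFinEquiv =
      Matrix.fromBlocks
        (Matrix.of fun (i k : Fin n) => g.eval (α k) * (vmono n α) i k) 0 0
        (Matrix.of fun (i k : Fin m) => f.eval (β k) * (vmono m β) i k) := by
    ext i k
    rcases i with i | i <;> rcases k with k | k <;>
      simp only [Matrix.submatrix_apply, finSumFinEquiv_apply_left, finSumFinEquiv_apply_right,
        Fin.append_left, Fin.append_right, Matrix.of_apply, Fin.coe_castAdd, Fin.coe_natAdd,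
        Matrix.fromBlocks_apply₁₁, Matrix.fromBlocks_apply₁₂, Matrix.fromBlocks_apply₂₁,
        Matrix.fromBlocks_apply₂₂, vmono]
    · rw [if_pos i.isLt]
    · rw [if_pos i.isLt, hgβ k, zero_mul]; rfl
    · rw [if_neg (by omega), hfα k, zero_mul]; rfl
    · rw [if_neg (by omega)]
      congr 2
      omega
  rw [hW, Matrix.det_fromBlocks_zero₂₁, Matrix.det_mul_row, Matrix.det_mul_row]

lemma prod_Ioi_append (n m : ℕ) (α : Fin n → R) (β : Fin m → R) :
    (∏ i : Fin (n + m), ∏ j ∈ Ioi i, (Fin.append α β j - Fin.append α β i)) =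
      ((∏ i : Fin n, ∏ j ∈ Ioi i, (α j - α i)) *
        (∏ i : Fin m, ∏ j ∈ Ioi i, (β j - β i))) *
        ∏ i : Fin n, ∏ j : Fin m, (β j - α i) := by
  set γ := Fin.append α β with hγdef
  have hγ1 : ∀ (k : Fin (n + m)) (h : (k : ℕ) < n), γ k = α ⟨k, h⟩ := by
    intro k h
    have hc : Fin.castAdd m (⟨k, h⟩ : Fin n) = k := Fin.ext rfl
    conv_lhs => rw [← hc]
    rw [hγdef, Fin.append_left]
  have hγ2 : ∀ (k : Fin (n + m)) (h : n ≤ (k : ℕ)), γ k = β ⟨(k : ℕ) - n, by omega⟩ := by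
    intro k h
    have hc : Fin.natAdd n (⟨(k : ℕ) - n, by omega⟩ : Fin m) = k := Fin.ext (by simp; omega)
    conv_lhs => rw [← hc]
    rw [hγdef, Fin.append_right]
  set S := (univ : Finset (Fin (n + m))).sigma (fun i => Ioi i) with hS
  set f : (Σ _ : Fin (n + m), Fin (n + m)) → R := fun p => γ p.2 - γ p.1 with hf
  have hA : ∏ x ∈ S.filter (fun p => ((p.2 : ℕ) < n)), f x
      = ∏ i : Fin n, ∏ j ∈ Ioi i, (α j - α i) := by
    rw [← Finset.prod_sigma (univ : Finset (Fin n)) (fun i => Ioi i) (fun p => α p.2 - α p.1)]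
    refine Finset.prod_bij'
      (fun p hp => (⟨⟨p.1, ?_⟩, ⟨p.2, ?_⟩⟩ : Σ _ : Fin n, Fin n))
      (fun p _ => (⟨⟨p.1, by omega⟩, ⟨p.2, by omega⟩⟩ : Σ _ : Fin (n + m), Fin (n + m)))
      ?_ ?_ ?_ ?_ ?_
    · simp only [hS, mem_filter, mem_sigma, mem_univ, mem_Ioi, Fin.lt_def] at hp; omega
    · simp only [hS, mem_filter, mem_sigma, mem_univ, mem_Ioi, Fin.lt_def] at hp; omega
    · intro p hp
      simp only [hS, mem_filter, mem_sigma, mem_univ, mem_Ioi, Fin.lt_def, true_and] at hp ⊢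
      omega
    · intro p hp
      simp only [hS, mem_filter, mem_sigma, mem_univ, mem_Ioi, Fin.lt_def, true_and] at hp ⊢
      omega
    · intro p hp; rfl
    · intro p hp; rfl
    · intro p hp
      simp only [hS, mem_filter, mem_sigma, mem_univ, mem_Ioi, Fin.lt_def, true_and] at hp
      show γ p.2 - γ p.1 = _
      rw [hγ1 p.2 (by omega), hγ1 p.1 (by omega)]
  have hB : ∏ x ∈ (S.filter (fun p => ¬ ((p.2 : ℕ) < n))).filter (fun p => ((p.1 : ℕ) < n)), f x
      = ∏ i : Fin n, ∏ j : Fin m, (β j - α i) := by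
    rw [← Finset.prod_sigma (univ : Finset (Fin n)) (fun _ => (univ : Finset (Fin m)))
      (fun p => β p.2 - α p.1)]
    refine Finset.prod_bij'
      (fun p hp => (⟨⟨p.1, ?_⟩, ⟨(p.2 : ℕ) - n, ?_⟩⟩ : Σ _ : Fin n, Fin m))
      (fun p _ => (⟨⟨p.1, by omega⟩, ⟨n + (p.2 : ℕ), by omega⟩⟩ :
        Σ _ : Fin (n + m), Fin (n + m)))
      ?_ ?_ ?_ ?_ ?_
    · simp only [hS, mem_filter, mem_sigma, mem_univ, mem_Ioi, Fin.lt_def, true_and] at hp; omega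
    · have := p.2.isLt
      simp only [hS, mem_filter, mem_sigma, mem_univ, mem_Ioi, Fin.lt_def, true_and] at hp; omega
    · intro p hp
      simp only [mem_sigma, mem_univ, and_self]
    · intro p hp
      have h1 := p.1.isLt
      have h2 := p.2.isLt
      simp only [hS, mem_filter, mem_sigma, mem_univ, mem_Ioi, Fin.lt_def, true_and] at hp ⊢
      omega
    · intro p hp
      simp only [hS, mem_filter, mem_sigma, mem_univ, mem_Ioi, Fin.lt_def, true_and] at hp
      dsimp only
      ext <;>
        first
          | rfl
          | (dsimp only; omega)
          | (rw [heq_eq_eq, Fin.ext_iff]; simp only [Fin.val_mk]; omega)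
          | (rw [Fin.ext_iff]; simp only [Fin.val_mk]; omega)
    · intro p hp
      dsimp only
      ext <;>
        first
          | rfl
          | (dsimp only; omega)
          | (rw [heq_eq_eq, Fin.ext_iff]; simp only [Fin.val_mk]; omega)
          | (rw [Fin.ext_iff]; simp only [Fin.val_mk]; omega)
    · intro p hp
      simp only [hS, mem_filter, mem_sigma, mem_univ, mem_Ioi, Fin.lt_def, true_and] at hp
      show γ p.2 - γ p.1 = _
      rw [hγ2 p.2 (by omega), hγ1 p.1 (by omega)]
  have hC : ∏ x ∈ (S.filter (fun p => ¬ ((p.2 : ℕ) < n))).filter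
        (fun p => ¬ ((p.1 : ℕ) < n)), f x
      = ∏ i : Fin m, ∏ j ∈ Ioi i, (β j - β i) := by
    rw [← Finset.prod_sigma (univ : Finset (Fin m)) (fun i => Ioi i) (fun p => β p.2 - β p.1)]
    refine Finset.prod_bij'
      (fun p hp => (⟨⟨(p.1 : ℕ) - n, ?_⟩, ⟨(p.2 : ℕ) - n, ?_⟩⟩ : Σ _ : Fin m, Fin m))
      (fun p _ => (⟨⟨n + (p.1 : ℕ), by omega⟩, ⟨n + (p.2 : ℕ), by omega⟩⟩ :
        Σ _ : Fin (n + m), Fin (n + m)))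
      ?_ ?_ ?_ ?_ ?_
    · have := p.1.isLt
      simp only [hS, mem_filter, mem_sigma, mem_univ, mem_Ioi, Fin.lt_def, true_and] at hp; omega
    · have := p.2.isLt
      simp only [hS, mem_filter, mem_sigma, mem_univ, mem_Ioi, Fin.lt_def, true_and] at hp; omega
    · intro p hp
      simp only [hS, mem_filter, mem_sigma, mem_univ, mem_Ioi, Fin.lt_def, true_and] at hp ⊢
      omega
    · intro p hp
      have h1 := p.1.isLt
      have h2 := p.2.isLt
      simp only [hS, mem_filter, mem_sigma, mem_univ, mem_Ioi, Fin.lt_def, true_and] at hp ⊢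
      omega
    · intro p hp
      simp only [hS, mem_filter, mem_sigma, mem_univ, mem_Ioi, Fin.lt_def, true_and] at hp
      dsimp only
      ext <;>
        first
          | rfl
          | (dsimp only; omega)
          | (rw [heq_eq_eq, Fin.ext_iff]; simp only [Fin.val_mk]; omega)
          | (rw [Fin.ext_iff]; simp only [Fin.val_mk]; omega)
    · intro p hp
      dsimp only
      ext <;>
        first
          | rfl
          | (dsimp only; omega)
          | (rw [heq_eq_eq, Fin.ext_iff]; simp only [Fin.val_mk]; omega)
          | (rw [Fin.ext_iff]; simp only [Fin.val_mk]; omega)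
    · intro p hp
      simp only [hS, mem_filter, mem_sigma, mem_univ, mem_Ioi, Fin.lt_def, true_and] at hp
      show γ p.2 - γ p.1 = _
      rw [hγ2 p.2 (by omega), hγ2 p.1 (by omega)]
  have hsplit2 : ∏ x ∈ S.filter (fun p => ¬ ((p.2 : ℕ) < n)), f x
      = (∏ i : Fin n, ∏ j : Fin m, (β j - α i)) * ∏ i : Fin m, ∏ j ∈ Ioi i, (β j - β i) := by
    rw [← Finset.prod_filter_mul_prod_filter_not (S.filter (fun p => ¬ ((p.2 : ℕ) < n)))
      (fun p => ((p.1 : ℕ) < n)) f, hB, hC]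
  have hsplit1 : ∏ x ∈ S, f x
      = (∏ i : Fin n, ∏ j ∈ Ioi i, (α j - α i)) *
        ((∏ i : Fin n, ∏ j : Fin m, (β j - α i)) * ∏ i : Fin m, ∏ j ∈ Ioi i, (β j - β i)) := by
    rw [← Finset.prod_filter_mul_prod_filter_not S (fun p => ((p.2 : ℕ) < n)) f, hA, hsplit2]
  rw [← Finset.prod_sigma (univ : Finset (Fin (n + m))) (fun i => Ioi i)
    (fun p => γ p.2 - γ p.1)]
  rw [show (fun (p : Σ _ : Fin (n + m), Fin (n + m)) => γ p.2 - γ p.1) = f from rfl] at *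
  rw [hsplit1]
  ring

lemma sum_range_id_add (n m : ℕ) :
    ∑ i ∈ range (n + m), i = (∑ i ∈ range n, i) + (∑ i ∈ range m, i) + n * m := by
  induction m with
  | zero => simp
  | succ k ih =>
    rw [show n + (k + 1) = (n + k) + 1 from rfl, Finset.sum_range_succ, ih,
      Finset.sum_range_succ (fun i => i) k]
    ring

lemma det_sylAux_prod {R : Type*} [CommRing R] (n m : ℕ) (α : Fin n → R) (β : Fin m → R) :
    (sylAux n m (∏ i, (X - C (α i)) : Polynomial R).coeff
        (∏ j, (X - C (β j)) : Polynomial R).coeff).det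
      = (-1) ^ (n * m) * ∏ i, ∏ j, (α i - β j) := by
  -- generic case first
  set S := MvPolynomial (Fin n ⊕ Fin m) ℤ with hSdef
  set A : Fin n → S := fun i => MvPolynomial.X (Sum.inl i) with hA
  set B : Fin m → S := fun j => MvPolynomial.X (Sum.inr j) with hB
  set F : Polynomial S := ∏ i, (X - C (A i)) with hF
  set G : Polynomial S := ∏ j, (X - C (B j)) with hG
  have hFdeg : F.natDegree ≤ n := by
    rw [hF, natDegree_prod_of_monic _ _ (fun i _ => monic_X_sub_C (A i))]
    simp
  have hGdeg : G.natDegree ≤ m := by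
    rw [hG, natDegree_prod_of_monic _ _ (fun j _ => monic_X_sub_C (B j))]
    simp
  have hFroot : ∀ i, F.eval (A i) = 0 := by
    intro i
    rw [hF, eval_prod]
    exact Finset.prod_eq_zero (mem_univ i) (by simp)
  have hGroot : ∀ j, G.eval (B j) = 0 := by
    intro j
    rw [hG, eval_prod]
    exact Finset.prod_eq_zero (mem_univ j) (by simp)
  have hGevalA : ∀ i, G.eval (A i) = ∏ j, (A i - B j) := by
    intro i; rw [hG, eval_prod]; simp
  have hFevalB : ∀ j, F.eval (B j) = ∏ i, (B j - A i) := by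
    intro j; rw [hF, eval_prod]; simp
  set γ : Fin (n + m) → S := Fin.append A B with hγ
  have E0 : (sylAux n m F.coeff G.coeff).det * (vmono (n + m) γ).det
      = ((∏ k, G.eval (A k)) * (vmono n A).det) * ((∏ k, F.eval (B k)) * (vmono m B).det) := by
    rw [← Matrix.det_mul, sylAux_mul_vmono n m F G hFdeg hGdeg γ, det_W n m F G A B hFroot hGroot]
  set Pα : S := ∏ i : Fin n, ∏ j ∈ Ioi i, (A j - A i) with hPα
  set Pβ : S := ∏ i : Fin m, ∏ j ∈ Ioi i, (B j - B i) with hPβ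
  set Cross : S := ∏ i : Fin n, ∏ j : Fin m, (B j - A i) with hCross
  have hvγ : (vmono (n + m) γ).det = (-1 : S) ^ (∑ i ∈ range (n + m), i) * ((Pα * Pβ) * Cross) := by
    rw [det_vmono _ _ (sign_revPerm _), hγ, prod_Ioi_append]
  have hvα : (vmono n A).det = (-1 : S) ^ (∑ i ∈ range n, i) * Pα :=
    det_vmono _ _ (sign_revPerm _)
  have hvβ : (vmono m B).det = (-1 : S) ^ (∑ i ∈ range m, i) * Pβ :=
    det_vmono _ _ (sign_revPerm _)
  have hQF : (∏ k, F.eval (B k)) = Cross := by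
    rw [hCross, Finset.prod_comm]
    exact Finset.prod_congr rfl fun j _ => hFevalB j
  have hne : ∀ (u v : Fin n ⊕ Fin m), u ≠ v → (MvPolynomial.X u - MvPolynomial.X v : S) ≠ 0 :=
    fun u v h => sub_ne_zero_of_ne (MvPolynomial.X_injective.ne h)
  have hPαne : Pα ≠ 0 := by
    rw [hPα]
    rw [Finset.prod_ne_zero_iff]
    intro i _
    rw [Finset.prod_ne_zero_iff]
    intro j hj
    rw [mem_Ioi] at hj
    exact hne _ _ (by simp only [ne_eq, Sum.inl.injEq]; exact hj.ne')
  have hPβne : Pβ ≠ 0 := by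
    rw [hPβ, Finset.prod_ne_zero_iff]
    intro i _
    rw [Finset.prod_ne_zero_iff]
    intro j hj
    rw [mem_Ioi] at hj
    exact hne _ _ (by simp only [ne_eq, Sum.inr.injEq]; exact hj.ne')
  have hCrossne : Cross ≠ 0 := by
    rw [hCross, Finset.prod_ne_zero_iff]
    intro i _
    rw [Finset.prod_ne_zero_iff]
    intro j _
    exact hne _ _ (by simp)
  have hQG : (∏ k, G.eval (A k)) = ∏ i, ∏ j, (A i - B j) :=
    Finset.prod_congr rfl fun i _ => hGevalA i
  rw [hvγ, hvα, hvβ, hQF, hQG] at E0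
  have hcancel : (sylAux n m F.coeff G.coeff).det * (-1 : S) ^ (∑ i ∈ range (n + m), i)
      = (∏ i, ∏ j, (A i - B j)) *
          ((-1 : S) ^ (∑ i ∈ range n, i) * (-1 : S) ^ (∑ i ∈ range m, i)) := by
    apply mul_right_cancel₀
      (b := (Pα * Pβ) * Cross) (mul_ne_zero (mul_ne_zero hPαne hPβne) hCrossne)
    linear_combination E0
  have hsq : ∀ k : ℕ, (-1 : S) ^ k * (-1 : S) ^ k = 1 := by
    intro k
    rw [← pow_add]
    exact Even.neg_one_pow ⟨k, rfl⟩
  have hgen : (sylAux n m F.coeff G.coeff).det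
      = (-1 : S) ^ (n * m) * ∏ i, ∏ j, (A i - B j) := by
    have h2 := congrArg (fun x => x * (-1 : S) ^ (∑ i ∈ range (n + m), i)) hcancel
    rw [mul_assoc, hsq] at h2
    rw [mul_one] at h2
    rw [h2, sum_range_id_add]
    rw [show (∑ i ∈ range n, i) + (∑ i ∈ range m, i) + n * m
      = ((∑ i ∈ range n, i) + (∑ i ∈ range m, i)) + n * m from rfl, pow_add, pow_add]
    have : ((-1 : S) ^ (∑ i ∈ range n, i) * (-1 : S) ^ (∑ i ∈ range m, i)) *
        ((-1 : S) ^ (∑ i ∈ range n, i) * (-1 : S) ^ (∑ i ∈ range m, i)) = 1 := by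
      rw [mul_mul_mul_comm, hsq, hsq, one_mul]
    ring_nf
    rw [mul_assoc, ← mul_assoc ((-1 : S) ^ (∑ i ∈ range n, i) * (-1 : S) ^ (∑ i ∈ range m, i)), this, one_mul, mul_comm]
  -- transfer to R via evaluation hom
  set φ : S →+* R := MvPolynomial.eval₂Hom (Int.castRingHom R) (Sum.elim α β) with hφ
  have hφA : ∀ i, φ (A i) = α i := by
    intro i; rw [hφ, hA]; rw [MvPolynomial.eval₂Hom_X']; rfl
  have hφB : ∀ j, φ (B j) = β j := by
    intro j; rw [hφ, hB]; rw [MvPolynomial.eval₂Hom_X']; rfl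
  have hmapF : F.map φ = ∏ i, (X - C (α i)) := by
    rw [hF, Polynomial.map_prod]
    refine Finset.prod_congr rfl fun i _ => ?_
    rw [Polynomial.map_sub, Polynomial.map_X, Polynomial.map_C, hφA]
  have hmapG : G.map φ = ∏ j, (X - C (β j)) := by
    rw [hG, Polynomial.map_prod]
    refine Finset.prod_congr rfl fun j _ => ?_
    rw [Polynomial.map_sub, Polynomial.map_X, Polynomial.map_C, hφB]
  have hmatrix : φ.mapMatrix (sylAux n m F.coeff G.coeff)
      = sylAux n m (∏ i, (X - C (α i)) : Polynomial R).coeff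
          (∏ j, (X - C (β j)) : Polynomial R).coeff := by
    ext i j
    simp only [sylAux, RingHom.mapMatrix_apply, Matrix.map_apply, Matrix.of_apply, apply_ite φ,
      map_zero, ← Polynomial.coeff_map, hmapF, hmapG]
  have hdet := congrArg φ hgen
  rw [RingHom.map_det, hmatrix] at hdet
  rw [hdet, _root_.map_mul, map_pow, map_neg, _root_.map_one, map_prod]
  congr 1
  refine Finset.prod_congr rfl fun i _ => ?_
  rw [map_prod]
  refine Finset.prod_congr rfl fun j _ => ?_
  rw [map_sub, hφA, hφB]

lemma sylvester_eq_sylAux (f g : Polynomial R) :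
    _root_.sylvester f g = sylAux f.natDegree g.natDegree f.coeff g.coeff := rfl

end ResultantAux

open Matrix Finset in
/-- If `f = a_n ∏ (X - α i)` and `g = b_m ∏ (X - β j)` split completely, with nonzero
leading coefficients `a_n`, `b_m`, then
`Res(f, g) = (-1)^(n m) * a_n^m * b_m^n * ∏ i ∏ j (α i - β j)`. -/
theorem resultant_eq_prod_roots {R : Type*} [CommRing R] [IsDomain R]
    (n m : ℕ) (a b : R) (ha : a ≠ 0) (hb : b ≠ 0)
    (α : Fin n → R) (β : Fin m → R) (f g : Polynomial R)
    (hf : f = C a * ∏ i, (X - C (α i)))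
    (hg : g = C b * ∏ j, (X - C (β j))) :
    _root_.resultant f g = (-1) ^ (n * m) * a ^ m * b ^ n * ∏ i, ∏ j, (α i - β j) := by
  set F0 : Polynomial R := ∏ i, (X - C (α i)) with hF0
  set G0 : Polynomial R := ∏ j, (X - C (β j)) with hG0
  have hF0m : F0.Monic := monic_prod_of_monic _ _ fun i _ => monic_X_sub_C (α i)
  have hG0m : G0.Monic := monic_prod_of_monic _ _ fun j _ => monic_X_sub_C (β j)
  have hF0d : F0.natDegree = n := by
    rw [hF0, natDegree_prod_of_monic _ _ (fun i _ => monic_X_sub_C (α i))]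
    simp
  have hG0d : G0.natDegree = m := by
    rw [hG0, natDegree_prod_of_monic _ _ (fun j _ => monic_X_sub_C (β j))]
    simp
  have hfd : f.natDegree = n := by
    rw [hf, natDegree_mul (C_ne_zero.mpr ha) hF0m.ne_zero, natDegree_C, hF0d, zero_add]
  have hgd : g.natDegree = m := by
    rw [hg, natDegree_mul (C_ne_zero.mpr hb) hG0m.ne_zero, natDegree_C, hG0d, zero_add]
  have hres : _root_.resultant f g = (sylAux f.natDegree g.natDegree f.coeff g.coeff).det := rfl
  rw [hfd, hgd] at hres
  have hcf : f.coeff = fun k => a * F0.coeff k := by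
    funext k; rw [hf, coeff_C_mul]
  have hcg : g.coeff = fun k => b * G0.coeff k := by
    funext k; rw [hg, coeff_C_mul]
  rw [hcf, hcg] at hres
  have hscale : sylAux n m (fun k => a * F0.coeff k) (fun k => b * G0.coeff k)
      = Matrix.of fun (i j : Fin (n + m)) =>
          (if (i : ℕ) < n then b else a) * sylAux n m F0.coeff G0.coeff i j := by
    ext i j
    simp only [sylAux, Matrix.of_apply]
    by_cases hi : (i : ℕ) < n
    · rw [if_pos hi, if_pos hi, if_pos hi]
      split <;> simp
    · rw [if_neg hi, if_neg hi, if_neg hi]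
      split <;> simp
  rw [hscale, Matrix.det_mul_column] at hres
  have hprod : (∏ i : Fin (n + m), (if (i : ℕ) < n then b else a)) = b ^ n * a ^ m := by
    rw [Fin.prod_univ_add]
    congr 1
    · rw [Finset.prod_congr rfl (fun i _ => if_pos (by simpa using i.isLt))]
      simp
    · rw [Finset.prod_congr rfl (fun (i : Fin m) (_ : i ∈ univ) =>
        if_neg (by simp))]
      simp
  rw [hprod, det_sylAux_prod] at hres
  rw [hres]
  ring
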